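/- Let p < 0, α_1, ..., α_N > 0, and let u_1, ..., u_N be unit vectors not concentrated on a closed hemisphere. Suppose (P_i) is a sequence of polytopes, each containing the origin in its interior with all facet outer normals among {u_1,...,u_N}, converging in Hausdorff distance to a polytope P containing the origin in its interior with facet normals among {u_1,...,u_N}. Let ξ(Q) denote the unique minimizer of Φ_Q(ξ) = Σ_k α_k (h(Q,u_k) − ξ·u_k)^p over Int(Q). Then ξ(P_i) → ξ(P) and Φ_{P_i}(ξ(P_i)) → Φ_P(ξ(P)). -/

import Mathlib

open Set Filter

/-- The support function of a set `K` in direction `v`. -/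
noncomputable def spt {n : ℕ} (K : Set (EuclideanSpace ℝ (Fin n)))
    (v : EuclideanSpace ℝ (Fin n)) : ℝ :=
  sSup ((fun x => (inner ℝ x v : ℝ)) '' K)

/-- The objective functional Φ_K. -/
noncomputable def Phi {n N : ℕ} (p : ℝ) (α : Fin N → ℝ)
    (u : Fin N → EuclideanSpace ℝ (Fin n)) (K : Set (EuclideanSpace ℝ (Fin n)))
    (ξ : EuclideanSpace ℝ (Fin n)) : ℝ :=
  ∑ k, α k * (spt K (u k) - (inner ℝ ξ (u k) : ℝ)) ^ p


section Helpers

lemma strictConvexOn_rpow_neg {p : ℝ} (hp : p < 0) :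
    StrictConvexOn ℝ (Set.Ioi (0:ℝ)) (fun x : ℝ => x ^ p) := by
  apply strictConvexOn_of_deriv2_pos (convex_Ioi 0)
  · intro x hx
    exact (Real.continuousAt_rpow_const x p (Or.inl (ne_of_gt hx))).continuousWithinAt
  · intro x hx
    rw [interior_Ioi] at hx
    have e1 : deriv (fun y : ℝ => y ^ p) =ᶠ[nhds x] fun y => p * y ^ (p - 1) := by
      filter_upwards [Ioi_mem_nhds hx] with y hy
      exact (Real.hasDerivAt_rpow_const (Or.inl (ne_of_gt hy))).deriv
    have e2 : deriv^[2] (fun y : ℝ => y ^ p) x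
        = p * ((p - 1) * x ^ (p - 1 - 1)) := by
      simp only [Function.iterate_succ, Function.iterate_zero, Function.comp_apply, id_eq]
      rw [e1.deriv_eq]
      exact ((Real.hasDerivAt_rpow_const (Or.inl (ne_of_gt hx))).const_mul p).deriv
    rw [e2]
    have h1 : 0 < p * (p - 1) := mul_pos_of_neg_of_neg hp (by linarith)
    have h2 : (0:ℝ) < x ^ (p - 1 - 1) := Real.rpow_pos_of_pos hx _
    nlinarith

variable {n N : ℕ}

lemma bddAbove_inner_image {K : Set (EuclideanSpace ℝ (Fin n))}
    (hK : Bornology.IsBounded K) (v : EuclideanSpace ℝ (Fin n)) :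
    BddAbove ((fun x => (inner ℝ x v : ℝ)) '' K) := by
  obtain ⟨C, hC⟩ := hK.subset_closedBall 0
  refine ⟨C * ‖v‖, ?_⟩
  rintro y ⟨x, hx, rfl⟩
  have := hC hx
  simp only [Metric.mem_closedBall, dist_zero_right] at this
  calc (inner ℝ x v : ℝ) ≤ ‖x‖ * ‖v‖ := real_inner_le_norm x v
    _ ≤ C * ‖v‖ := by
        have : (0:ℝ) ≤ ‖v‖ := norm_nonneg _
        nlinarith

lemma inner_le_spt {K : Set (EuclideanSpace ℝ (Fin n))}
    (hK : Bornology.IsBounded K) {x : EuclideanSpace ℝ (Fin n)} (hx : x ∈ K)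
    (v : EuclideanSpace ℝ (Fin n)) : (inner ℝ x v : ℝ) ≤ spt K v :=
  le_csSup (bddAbove_inner_image hK v) ⟨x, hx, rfl⟩

lemma spt_le {K : Set (EuclideanSpace ℝ (Fin n))} (hne : K.Nonempty)
    {v : EuclideanSpace ℝ (Fin n)} {c : ℝ} (h : ∀ x ∈ K, (inner ℝ x v : ℝ) ≤ c) :
    spt K v ≤ c :=
  csSup_le (hne.image _) (by rintro y ⟨x, hx, rfl⟩; exact h x hx)

lemma spt_sub_le {A B : Set (EuclideanSpace ℝ (Fin n))}
    (hAne : A.Nonempty) (hBne : B.Nonempty)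
    (hAbd : Bornology.IsBounded A) (hBbd : Bornology.IsBounded B)
    {v : EuclideanSpace ℝ (Fin n)} (hv : ‖v‖ = 1) :
    spt A v ≤ spt B v + Metric.hausdorffDist A B := by
  have fin : EMetric.hausdorffEdist A B ≠ ⊤ :=
    Metric.hausdorffEdist_ne_top_of_nonempty_of_bounded hAne hBne hAbd hBbd
  apply spt_le hAne
  intro x hx
  have hinf : Metric.infDist x B ≤ Metric.hausdorffDist A B :=
    Metric.infDist_le_hausdorffDist_of_mem hx fin
  refine le_of_forall_pos_le_add fun ε hε => ?_
  obtain ⟨y, hy, hdy⟩ := (Metric.infDist_lt_iff hBne).1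
    (lt_of_le_of_lt hinf (lt_add_of_pos_right _ hε))
  have h1 : (inner ℝ x v : ℝ) = inner ℝ y v + inner ℝ (x - y) v := by
    rw [inner_sub_left]; ring
  have h2 : (inner ℝ (x - y) v : ℝ) ≤ ‖x - y‖ * ‖v‖ := real_inner_le_norm _ _
  rw [hv, mul_one] at h2
  have h3 : ‖x - y‖ = dist x y := (dist_eq_norm x y).symm
  have h4 : (inner ℝ y v : ℝ) ≤ spt B v := inner_le_spt hBbd hy v
  rw [h1]; rw [h3] at h2
  linarith

lemma abs_spt_sub_le {A B : Set (EuclideanSpace ℝ (Fin n))}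
    (hAne : A.Nonempty) (hBne : B.Nonempty)
    (hAbd : Bornology.IsBounded A) (hBbd : Bornology.IsBounded B)
    {v : EuclideanSpace ℝ (Fin n)} (hv : ‖v‖ = 1) :
    |spt A v - spt B v| ≤ Metric.hausdorffDist A B := by
  rw [abs_sub_le_iff]
  constructor
  · linarith [spt_sub_le hAne hBne hAbd hBbd hv]
  · rw [Metric.hausdorffDist_comm]
    linarith [spt_sub_le hBne hAne hBbd hAbd hv]

lemma K_closed {u : Fin N → EuclideanSpace ℝ (Fin n)}
    {K : Set (EuclideanSpace ℝ (Fin n))} {c : Fin N → ℝ}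
    (hKdef : K = ⋂ k, {x : EuclideanSpace ℝ (Fin n) | (inner ℝ x (u k) : ℝ) ≤ c k}) :
    IsClosed K := by
  rw [hKdef]
  exact isClosed_iInter fun k =>
    isClosed_le (Continuous.inner continuous_id continuous_const) continuous_const

lemma K_convex {u : Fin N → EuclideanSpace ℝ (Fin n)}
    {K : Set (EuclideanSpace ℝ (Fin n))} {c : Fin N → ℝ}
    (hKdef : K = ⋂ k, {x : EuclideanSpace ℝ (Fin n) | (inner ℝ x (u k) : ℝ) ≤ c k}) :
    Convex ℝ K := by
  rw [hKdef]
  refine convex_iInter fun k => ?_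
  exact convex_halfSpace_le
    ⟨fun a b => inner_add_left a b _, fun r a => real_inner_smul_left a _ r⟩ _

lemma interior_K (u : Fin N → EuclideanSpace ℝ (Fin n)) (hu : ∀ k, ‖u k‖ = 1)
    {K : Set (EuclideanSpace ℝ (Fin n))} {c : Fin N → ℝ}
    (hKdef : K = ⋂ k, {x : EuclideanSpace ℝ (Fin n) | (inner ℝ x (u k) : ℝ) ≤ c k})
    (hKbd : Bornology.IsBounded K) (hne : K.Nonempty) :
    interior K = ⋂ k, {x : EuclideanSpace ℝ (Fin n) | (inner ℝ x (u k) : ℝ) < spt K (u k)} := by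
  apply Subset.antisymm
  · intro x hx
    obtain ⟨r, hr, hball⟩ := Metric.isOpen_iff.1 isOpen_interior x hx
    have hball' : Metric.ball x r ⊆ K := hball.trans interior_subset
    simp only [mem_iInter, mem_setOf_eq]
    intro k
    have hy : x + (r/2) • (u k) ∈ K := by
      apply hball'
      simp only [Metric.mem_ball, dist_self_add_left, norm_smul, hu k, mul_one]
      rw [Real.norm_eq_abs, abs_of_pos (by linarith)]
      linarith
    have h1 : (inner ℝ (x + (r/2) • u k) (u k) : ℝ) ≤ spt K (u k) :=
      inner_le_spt hKbd hy _
    rw [inner_add_left, real_inner_smul_left, real_inner_self_eq_norm_sq, hu k] at h1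
    nlinarith
  · intro x hx
    have hUopen : IsOpen (⋂ k, {y : EuclideanSpace ℝ (Fin n) | (inner ℝ y (u k) : ℝ) < spt K (u k)}) :=
      isOpen_iInter_of_finite fun k =>
        isOpen_lt (Continuous.inner continuous_id continuous_const) continuous_const
    have hUK : (⋂ k, {y : EuclideanSpace ℝ (Fin n) | (inner ℝ y (u k) : ℝ) < spt K (u k)}) ⊆ K := by
      intro y hy
      rw [hKdef]
      simp only [mem_iInter, mem_setOf_eq] at hy ⊢
      intro k
      have h2 : spt K (u k) ≤ c k := by
        apply spt_le hne
        intro z hz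
        rw [hKdef] at hz
        simp only [mem_iInter, mem_setOf_eq] at hz
        exact hz k
      exact le_of_lt (lt_of_lt_of_le (hy k) h2)
    exact interior_mono hUK (hUopen.subset_interior_iff.2 Subset.rfl hx)

lemma rpow_neg_tendsto_atTop {p : ℝ} (hp : p < 0) {t : ℕ → ℝ} (ht : ∀ j, 0 < t j)
    (h0 : Tendsto t atTop (nhds 0)) : Tendsto (fun j => t j ^ p) atTop atTop := by
  have hlog : Tendsto (fun j => Real.log (t j)) atTop atBot := by
    apply Real.tendsto_log_nhdsGT_zero.comp
    rw [tendsto_nhdsWithin_iff]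
    exact ⟨h0, Eventually.of_forall fun j => ht j⟩
  have h2 : Tendsto (fun j => p * Real.log (t j)) atTop atTop :=
    Tendsto.const_mul_atBot_of_neg hp hlog
  have h3 : Tendsto (fun j => Real.exp (p * Real.log (t j))) atTop atTop :=
    Real.tendsto_exp_atTop.comp h2
  refine h3.congr fun j => ?_
  rw [Real.rpow_def_of_pos (ht j), mul_comm]

lemma phi_tendsto_aux {N : ℕ} {p : ℝ} (α : Fin N → ℝ)
    {h : ℕ → Fin N → ℝ} {hl : Fin N → ℝ}
    (hh : ∀ k, Tendsto (fun i => h i k) atTop (nhds (hl k)))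
    {s : ℕ → Fin N → ℝ} {sl : Fin N → ℝ}
    (hs : ∀ k, Tendsto (fun i => s i k) atTop (nhds (sl k)))
    (hne : ∀ k, hl k - sl k ≠ 0) :
    Tendsto (fun i => ∑ k, α k * (h i k - s i k) ^ p) atTop
      (nhds (∑ k, α k * (hl k - sl k) ^ p)) := by
  apply tendsto_finset_sum
  intro k _
  exact (((hh k).sub (hs k)).rpow_const (Or.inl (hne k))).const_mul _

lemma min_unique {n N : ℕ} {p : ℝ} (hp : p < 0) {α : Fin N → ℝ} (hα : ∀ k, 0 < α k)
    {u : Fin N → EuclideanSpace ℝ (Fin n)}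
    (hhemi : ∀ x : EuclideanSpace ℝ (Fin n), x ≠ 0 → ∃ k, 0 < (inner ℝ x (u k) : ℝ))
    {Q : Set (EuclideanSpace ℝ (Fin n))} (hQconv : Convex ℝ Q)
    {x y : EuclideanSpace ℝ (Fin n)} (hx : x ∈ interior Q) (hy : y ∈ interior Q)
    (hxs : ∀ k, (inner ℝ x (u k) : ℝ) < spt Q (u k))
    (hys : ∀ k, (inner ℝ y (u k) : ℝ) < spt Q (u k))
    (hmin : IsMinOn (Phi p α u Q) (interior Q) y)
    (hval : Phi p α u Q x ≤ Phi p α u Q y) : x = y := by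
  by_contra hne
  obtain ⟨k0, hk0⟩ := hhemi (x - y) (sub_ne_zero.mpr hne)
  set m := (1/2 : ℝ) • x + (1/2 : ℝ) • y with hm
  have hmint : m ∈ interior Q :=
    hQconv.interior hx hy (by norm_num) (by norm_num) (by norm_num)
  set a : Fin N → ℝ := fun k => spt Q (u k) - inner ℝ x (u k) with ha
  set b : Fin N → ℝ := fun k => spt Q (u k) - inner ℝ y (u k) with hb
  have hapos : ∀ k, 0 < a k := fun k => sub_pos.2 (hxs k)
  have hbpos : ∀ k, 0 < b k := fun k => sub_pos.2 (hys k)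
  have hinm : ∀ k, spt Q (u k) - (inner ℝ m (u k) : ℝ) = (1/2) * a k + (1/2) * b k := by
    intro k
    simp only [hm, inner_add_left, real_inner_smul_left, ha, hb]
    ring
  have hterm : ∀ k, α k * (spt Q (u k) - (inner ℝ m (u k) : ℝ)) ^ p
      ≤ α k * ((1/2) * (a k ^ p) + (1/2) * (b k ^ p)) := by
    intro k
    rw [hinm k]
    rcases eq_or_ne (a k) (b k) with heq | hne'
    · rw [heq]
      apply le_of_eq
      have h1 : (1/2 : ℝ) * b k + (1/2) * b k = b k := by ring
      rw [h1]
      ring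
    · have := (strictConvexOn_rpow_neg hp).2 (mem_Ioi.2 (hapos k)) (mem_Ioi.2 (hbpos k))
        hne' (by norm_num : (0:ℝ) < 1/2) (by norm_num : (0:ℝ) < 1/2) (by norm_num)
      simp only [smul_eq_mul] at this
      exact mul_le_mul_of_nonneg_left this.le (hα k).le
  have hstrict : α k0 * (spt Q (u k0) - (inner ℝ m (u k0) : ℝ)) ^ p
      < α k0 * ((1/2) * (a k0 ^ p) + (1/2) * (b k0 ^ p)) := by
    rw [hinm k0]
    have hne' : a k0 ≠ b k0 := by
      have : (inner ℝ (x - y) (u k0) : ℝ) = inner ℝ x (u k0) - inner ℝ y (u k0) :=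
        inner_sub_left x y (u k0)
      simp only [ha, hb]
      intro hcontra
      rw [this] at hk0
      have : (inner ℝ x (u k0) : ℝ) = inner ℝ y (u k0) := by linarith
      linarith
    have := (strictConvexOn_rpow_neg hp).2 (mem_Ioi.2 (hapos k0)) (mem_Ioi.2 (hbpos k0))
      hne' (by norm_num : (0:ℝ) < 1/2) (by norm_num : (0:ℝ) < 1/2) (by norm_num)
    simp only [smul_eq_mul] at this
    exact mul_lt_mul_of_pos_left this (hα k0)
  have hsum : Phi p α u Q m < ∑ k, α k * ((1/2) * (a k ^ p) + (1/2) * (b k ^ p)) := by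
    unfold Phi
    exact Finset.sum_lt_sum (fun k _ => hterm k) ⟨k0, Finset.mem_univ k0, hstrict⟩
  have heq2 : ∑ k, α k * ((1/2) * (a k ^ p) + (1/2) * (b k ^ p))
      = (1/2) * Phi p α u Q x + (1/2) * Phi p α u Q y := by
    unfold Phi
    rw [Finset.mul_sum, Finset.mul_sum, ← Finset.sum_add_distrib]
    congr 1
    funext k
    simp only [ha, hb]
    ring
  have hlt : Phi p α u Q m < Phi p α u Q y := by
    rw [heq2] at hsum
    linarith
  exact absurd (hmin hmint) (not_le.2 hlt)

end Helpers

set_option maxHeartbeats 1000000 in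
/-- Continuity of the minimizing point and minimal value under Hausdorff
convergence of polytopes. -/
theorem stmt12 (n N : ℕ) (p : ℝ) (hp : p < 0) (α : Fin N → ℝ) (hα : ∀ k, 0 < α k)
    (u : Fin N → EuclideanSpace ℝ (Fin n)) (hu : ∀ k, ‖u k‖ = 1)
    (hhemi : ∀ x : EuclideanSpace ℝ (Fin n), x ≠ 0 → ∃ k, 0 < (inner ℝ x (u k) : ℝ))
    (P : ℕ → Set (EuclideanSpace ℝ (Fin n))) (b : ℕ → Fin N → ℝ)
    (hPdef : ∀ i, P i = ⋂ k, {x : EuclideanSpace ℝ (Fin n) | (inner ℝ x (u k) : ℝ) ≤ b i k})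
    (hPbd : ∀ i, Bornology.IsBounded (P i))
    (hP0 : ∀ i, (0 : EuclideanSpace ℝ (Fin n)) ∈ interior (P i))
    (Q : Set (EuclideanSpace ℝ (Fin n))) (bQ : Fin N → ℝ)
    (hQdef : Q = ⋂ k, {x : EuclideanSpace ℝ (Fin n) | (inner ℝ x (u k) : ℝ) ≤ bQ k})
    (hQbd : Bornology.IsBounded Q)
    (hQ0 : (0 : EuclideanSpace ℝ (Fin n)) ∈ interior Q)
    (hconv : Tendsto (fun i => Metric.hausdorffDist (P i) Q) atTop (nhds 0))
    (ξ : ℕ → EuclideanSpace ℝ (Fin n))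
    (hξ : ∀ i, ξ i ∈ interior (P i) ∧
      IsMinOn (Phi p α u (P i)) (interior (P i)) (ξ i))
    (ξQ : EuclideanSpace ℝ (Fin n))
    (hξQ : ξQ ∈ interior Q ∧ IsMinOn (Phi p α u Q) (interior Q) ξQ) :
    Tendsto ξ atTop (nhds ξQ) ∧
      Tendsto (fun i => Phi p α u (P i) (ξ i)) atTop (nhds (Phi p α u Q ξQ)) := by
  -- basic facts
  have hQne : Q.Nonempty := ⟨0, interior_subset hQ0⟩
  have hPne : ∀ i, (P i).Nonempty := fun i => ⟨0, interior_subset (hP0 i)⟩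
  have hQclosed : IsClosed Q := K_closed hQdef
  have hQconv : Convex ℝ Q := K_convex hQdef
  have hintQ := interior_K u hu hQdef hQbd hQne
  have hintP : ∀ i, interior (P i)
      = ⋂ k, {x : EuclideanSpace ℝ (Fin n) | (inner ℝ x (u k) : ℝ) < spt (P i) (u k)} :=
    fun i => interior_K u hu (hPdef i) (hPbd i) (hPne i)
  have memIntQ : ∀ x : EuclideanSpace ℝ (Fin n),
      x ∈ interior Q ↔ ∀ k, (inner ℝ x (u k) : ℝ) < spt Q (u k) := by
    intro x; rw [hintQ]; simp [mem_iInter]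
  have memIntP : ∀ i, ∀ x : EuclideanSpace ℝ (Fin n),
      x ∈ interior (P i) ↔ ∀ k, (inner ℝ x (u k) : ℝ) < spt (P i) (u k) := by
    intro i x; rw [hintP i]; simp [mem_iInter]
  have fin : ∀ i, EMetric.hausdorffEdist (P i) Q ≠ ⊤ := fun i =>
    Metric.hausdorffEdist_ne_top_of_nonempty_of_bounded (hPne i) hQne (hPbd i) hQbd
  -- heights converge
  have hhk : ∀ k, Tendsto (fun i => spt (P i) (u k)) atTop (nhds (spt Q (u k))) := by
    intro k
    rw [← tendsto_sub_nhds_zero_iff]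
    apply squeeze_zero_norm (fun i => ?_) hconv
    rw [Real.norm_eq_abs]
    exact abs_spt_sub_le (hPne i) hQne (hPbd i) hQbd (hu k)
  have hξQlt : ∀ k, (inner ℝ ξQ (u k) : ℝ) < spt Q (u k) := (memIntQ ξQ).1 hξQ.1
  -- eventually ξQ ∈ interior (P i)
  have hξQP : ∀ᶠ i in atTop, ξQ ∈ interior (P i) := by
    have : ∀ᶠ i in atTop, ∀ k, (inner ℝ ξQ (u k) : ℝ) < spt (P i) (u k) := by
      rw [eventually_all]
      intro k
      exact (hhk k).eventually_mem (Ioi_mem_nhds (hξQlt k))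
    exact this.mono fun i hi => (memIntP i ξQ).2 hi
  -- Phi (P i) ξQ → Phi Q ξQ
  have hPhiXiQ : Tendsto (fun i => Phi p α u (P i) ξQ) atTop (nhds (Phi p α u Q ξQ)) := by
    unfold Phi
    exact phi_tendsto_aux (h := fun i k => spt (P i) (u k)) (hl := fun k => spt Q (u k))
      (s := fun _ k => (inner ℝ ξQ (u k) : ℝ)) (sl := fun k => (inner ℝ ξQ (u k) : ℝ))
      α hhk (fun k => tendsto_const_nhds) (fun k => ne_of_gt (sub_pos.2 (hξQlt k)))
  have hub : ∀ᶠ i in atTop, Phi p α u (P i) (ξ i) ≤ Phi p α u (P i) ξQ :=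
    hξQP.mono fun i hi => (hξ i).2 hi
  have hC : ∀ᶠ i in atTop, Phi p α u (P i) (ξ i) ≤ Phi p α u Q ξQ + 1 := by
    filter_upwards [hub, hPhiXiQ.eventually_mem
      (Iio_mem_nhds (lt_add_one (Phi p α u Q ξQ)))] with i h1 h2
    exact h1.trans (le_of_lt h2)
  -- positivity of bases at the minimizers
  have hbase : ∀ i k, (inner ℝ (ξ i) (u k) : ℝ) < spt (P i) (u k) :=
    fun i k => (memIntP i (ξ i)).1 (hξ i).1 k
  -- main convergence of minimizers
  have main1 : Tendsto ξ atTop (nhds ξQ) := by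
    apply tendsto_of_subseq_tendsto
    intro ns hns
    -- boundedness
    obtain ⟨D, hD⟩ := hconv.bddAbove_range
    have hDle : ∀ i, Metric.hausdorffDist (P i) Q ≤ D := fun i =>
      hD ⟨i, rfl⟩
    obtain ⟨R, hR⟩ := hQbd.subset_closedBall 0
    have hball : ∀ i, ξ i ∈ Metric.closedBall (0 : EuclideanSpace ℝ (Fin n)) (D + 1 + R) := by
      intro i
      have hinf : Metric.infDist (ξ i) Q ≤ D :=
        (Metric.infDist_le_hausdorffDist_of_mem (interior_subset (hξ i).1) (fin i)).trans
          (hDle i)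
      obtain ⟨y, hy, hdy⟩ := (Metric.infDist_lt_iff hQne).1
        (lt_of_le_of_lt hinf (lt_add_one D))
      have h2 : dist y (0 : EuclideanSpace ℝ (Fin n)) ≤ R := hR hy
      simp only [Metric.mem_closedBall]
      calc dist (ξ i) 0 ≤ dist (ξ i) y + dist y 0 := dist_triangle _ _ _
        _ ≤ (D + 1) + R := by linarith
    obtain ⟨a, _, φ, hφmono, hφtendsto⟩ :=
      tendsto_subseq_of_bounded Metric.isBounded_closedBall (fun m => hball (ns m))
    set I : ℕ → ℕ := ns ∘ φ with hIdef
    have hI : Tendsto I atTop atTop := hns.comp hφmono.tendsto_atTop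
    have hξI : Tendsto (fun m => ξ (I m)) atTop (nhds a) := hφtendsto
    -- a ∈ Q
    have haQ : a ∈ Q := by
      have h1 : Tendsto (fun m => Metric.infDist (ξ (I m)) Q) atTop
          (nhds (Metric.infDist a Q)) :=
        ((Metric.continuous_infDist_pt Q).tendsto a).comp hξI
      have h2 : Tendsto (fun m => Metric.hausdorffDist (P (I m)) Q) atTop (nhds 0) :=
        hconv.comp hI
      have h3 : Metric.infDist a Q ≤ 0 :=
        le_of_tendsto_of_tendsto' h1 h2 fun m =>
          Metric.infDist_le_hausdorffDist_of_mem (interior_subset (hξ (I m)).1) (fin (I m))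
      exact (hQclosed.mem_iff_infDist_zero hQne).2
        (le_antisymm h3 Metric.infDist_nonneg)
    have hhkI : ∀ k, Tendsto (fun m => spt (P (I m)) (u k)) atTop (nhds (spt Q (u k))) :=
      fun k => (hhk k).comp hI
    have hinnerI : ∀ k, Tendsto (fun m => (inner ℝ (ξ (I m)) (u k) : ℝ)) atTop
        (nhds (inner ℝ a (u k))) := fun k =>
      ((Continuous.inner continuous_id (continuous_const : Continuous fun _ => u k)).tendsto
        a).comp hξI
    -- a ∈ interior Q
    have haint : a ∈ interior Q := by
      by_contra hnot
      obtain ⟨k0, hk0⟩ : ∃ k0, spt Q (u k0) ≤ (inner ℝ a (u k0) : ℝ) := by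
        by_contra hall
        push_neg at hall
        exact hnot ((memIntQ a).2 hall)
      have heq0 : spt Q (u k0) - (inner ℝ a (u k0) : ℝ) = 0 :=
        le_antisymm (by linarith) (by linarith [inner_le_spt hQbd haQ (u k0)])
      set t : ℕ → ℝ := fun m => spt (P (I m)) (u k0) - inner ℝ (ξ (I m)) (u k0) with ht
      have htpos : ∀ m, 0 < t m := fun m => sub_pos.2 (hbase (I m) k0)
      have ht0 : Tendsto t atTop (nhds 0) := by
        have := (hhkI k0).sub (hinnerI k0)
        rwa [heq0] at this
      have hT : Tendsto (fun m => α k0 * t m ^ p) atTop atTop :=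
        Tendsto.const_mul_atTop (hα k0) (rpow_neg_tendsto_atTop hp htpos ht0)
      have hlow : ∀ m, α k0 * t m ^ p ≤ Phi p α u (P (I m)) (ξ (I m)) := by
        intro m
        unfold Phi
        apply Finset.single_le_sum
          (f := fun k => α k * (spt (P (I m)) (u k) - (inner ℝ (ξ (I m)) (u k) : ℝ)) ^ p)
        · intro k _
          exact le_of_lt (mul_pos (hα k)
            (Real.rpow_pos_of_pos (sub_pos.2 (hbase (I m) k)) p))
        · exact Finset.mem_univ k0
      have hCI : ∀ᶠ m in atTop, Phi p α u (P (I m)) (ξ (I m)) ≤ Phi p α u Q ξQ + 1 :=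
        hI.eventually hC
      have hBig : ∀ᶠ m in atTop, Phi p α u Q ξQ + 2 ≤ α k0 * t m ^ p :=
        hT.eventually_ge_atTop _
      obtain ⟨m, h1, h2⟩ := (hCI.and hBig).exists
      linarith [hlow m]
    -- identify the limit
    have halt : ∀ k, (inner ℝ a (u k) : ℝ) < spt Q (u k) := (memIntQ a).1 haint
    have hPhiI : Tendsto (fun m => Phi p α u (P (I m)) (ξ (I m))) atTop
        (nhds (Phi p α u Q a)) := by
      unfold Phi
      exact phi_tendsto_aux (h := fun m k => spt (P (I m)) (u k)) (hl := fun k => spt Q (u k))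
        (s := fun m k => (inner ℝ (ξ (I m)) (u k) : ℝ)) (sl := fun k => (inner ℝ a (u k) : ℝ))
        α hhkI hinnerI (fun k => ne_of_gt (sub_pos.2 (halt k)))
    have hPhiXiQI : Tendsto (fun m => Phi p α u (P (I m)) ξQ) atTop
        (nhds (Phi p α u Q ξQ)) := hPhiXiQ.comp hI
    have hle : Phi p α u Q a ≤ Phi p α u Q ξQ :=
      le_of_tendsto_of_tendsto hPhiI hPhiXiQI (hI.eventually hub)
    have haeq : a = ξQ :=
      min_unique hp hα hhemi hQconv haint hξQ.1 halt hξQlt hξQ.2 hle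
    exact ⟨φ, haeq ▸ hξI⟩
  -- second conclusion
  refine ⟨main1, ?_⟩
  have hinner2 : ∀ k, Tendsto (fun i => (inner ℝ (ξ i) (u k) : ℝ)) atTop
      (nhds (inner ℝ ξQ (u k))) := fun k =>
    ((Continuous.inner continuous_id (continuous_const : Continuous fun _ => u k)).tendsto
      ξQ).comp main1
  unfold Phi
  exact phi_tendsto_aux (h := fun i k => spt (P i) (u k)) (hl := fun k => spt Q (u k))
    (s := fun i k => (inner ℝ (ξ i) (u k) : ℝ)) (sl := fun k => (inner ℝ ξQ (u k) : ℝ))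
    α hhk hinner2 (fun k => ne_of_gt (sub_pos.2 (hξQlt k)))
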